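/- Let j ≠ k in Fin n, let x = e_j + e_k, and let F = {{i} : i ∈ Fin n} ∪ {{j,k}}. Then the F-combinatorial metric d_F is a TS-metric on F₂ⁿ with B_{d_F}(0,1) = D_n(x) := {0, x} ∪ {e_i : i ∈ Fin n}. Consequently, if (D_n(x), C) is a tiling of F₂ⁿ, then C is a (d_F, 1)-perfect code. -/
import Mathlib


open Set Function

/-- A weight on a binary vector space `ι → ZMod 2`. -/
def IsWeight {ι : Type*} (ω : (ι → ZMod 2) → ℝ) : Prop :=
  (∀ x, 0 ≤ ω x) ∧ (∀ x, ω x = 0 ↔ x = 0) ∧ ∀ x y, ω (x + y) ≤ ω x + ω y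

/-- A function respects the support of vectors. -/
def RespectsSupport {ι : Type*} (ω : (ι → ZMod 2) → ℝ) : Prop :=
  ∀ x y : ι → ZMod 2, Function.support x ⊆ Function.support y → ω x ≤ ω y

/-- A TS-metric: a (translation-invariant) metric determined by a weight
that respects support, i.e. `d x y = ω (x + y)` (note `-y = y` in char 2). -/
def IsTSMetric {ι : Type*} (d : (ι → ZMod 2) → (ι → ZMod 2) → ℝ) : Prop :=
  ∃ ω, IsWeight ω ∧ RespectsSupport ω ∧ ∀ x y, d x y = ω (x + y)

/-- The ball `B_d(x, r)`. -/
def tsBall {ι : Type*} (d : (ι → ZMod 2) → (ι → ZMod 2) → ℝ) (x : ι → ZMod 2) (r : ℝ) :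
    Set (ι → ZMod 2) := {y | d x y ≤ r}

/-- `(D, C)` is a tiling: the translates `c + D`, `c ∈ C`, are pairwise disjoint
and cover the whole space. -/
def IsTiling {ι : Type*} (D C : Set (ι → ZMod 2)) : Prop :=
  (⋃ c ∈ C, (c + ·) '' D) = Set.univ ∧
  C.Pairwise fun c c' => Disjoint ((c + ·) '' D) ((c' + ·) '' D)

/-- `C` is a `(d, r)`-perfect code: the balls of radius `r` centered at codewords
are pairwise disjoint and cover the whole space. -/
def IsPerfectCode {ι : Type*} (d : (ι → ZMod 2) → (ι → ZMod 2) → ℝ) (r : ℝ)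
    (C : Set (ι → ZMod 2)) : Prop :=
  (⋃ c ∈ C, tsBall d c r) = Set.univ ∧
  C.Pairwise fun c c' => Disjoint (tsBall d c r) (tsBall d c' r)

/-- A polyhedromino: any two points of `D` are joined by a geodesic path
(w.r.t. the Hamming distance) lying inside `D`. -/
def IsPolyhedromino {ι : Type*} [Fintype ι] (D : Set (ι → ZMod 2)) : Prop :=
  ∀ x ∈ D, ∀ y ∈ D, ∃ γ : ℕ → (ι → ZMod 2),
    γ 0 = x ∧ γ (hammingDist x y) = y ∧
    (∀ i ≤ hammingDist x y, γ i ∈ D) ∧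
    ∀ i < hammingDist x y, hammingDist (γ i) (γ (i + 1)) = 1

/-- A poly-tiling: a tiling whose tile is a polyhedromino. -/
def IsPolyTiling {ι : Type*} [Fintype ι] (D C : Set (ι → ZMod 2)) : Prop :=
  IsTiling D C ∧ IsPolyhedromino D

/-- The vector `e_i` with support `{i}`. -/
def unitVec {ι : Type*} [DecidableEq ι] (i : ι) : ι → ZMod 2 := Pi.single i 1

/-- The `F`-combinatorial weight: the minimal number of members of `F` needed
to cover the support of `x`. -/
noncomputable def combWeight {ι : Type*} [DecidableEq ι] (F : Finset (Finset ι))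
    (x : ι → ZMod 2) : ℕ :=
  sInf {k | ∃ A : Finset (Finset ι), A ⊆ F ∧ A.card = k ∧ Function.support x ⊆ ↑(A.sup id)}

/-- The axioms of a metric. -/
def IsMetric {α : Type*} (d : α → α → ℝ) : Prop :=
  (∀ x y, d x y = 0 ↔ x = y) ∧ (∀ x y, d x y = d y x) ∧ ∀ x y z, d x z ≤ d x y + d y z

/-- The max-metric on the product (concatenation) space, identified with
functions on `Fin n ⊕ Fin m`. -/
def dmax {n m : ℕ} (d₁ : (Fin n → ZMod 2) → (Fin n → ZMod 2) → ℝ)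
    (d₂ : (Fin m → ZMod 2) → (Fin m → ZMod 2) → ℝ)
    (w w' : Fin n ⊕ Fin m → ZMod 2) : ℝ :=
  max (d₁ (fun i => w (Sum.inl i)) (fun i => w' (Sum.inl i)))
      (d₂ (fun j => w (Sum.inr j)) (fun j => w' (Sum.inr j)))

/-- The covering `F = {{i} : i ∈ Fin n} ∪ {{j, k}}`. -/
def F12 {n : ℕ} (j k : Fin n) : Finset (Finset (Fin n)) :=
  (Finset.univ.image fun i : Fin n => ({i} : Finset (Fin n))) ∪ {({j, k} : Finset (Fin n))}

/-- The tile `D_n(x) = {0, x} ∪ {e_i : i ∈ Fin n}`. -/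
def Dnx {n : ℕ} (x : Fin n → ZMod 2) : Set (Fin n → ZMod 2) :=
  {0, x} ∪ Set.range (fun i : Fin n => unitVec i)

section Aux

open Function Finset

variable {n : ℕ}

lemma zmod2_cases : ∀ a : ZMod 2, a = 0 ∨ a = 1 := by decide

lemma vec_add_self (v : Fin n → ZMod 2) : v + v = 0 := by
  funext i
  have : ∀ a : ZMod 2, a + a = 0 := by decide
  exact this (v i)

lemma singleton_mem_F12 (j k i : Fin n) : ({i} : Finset (Fin n)) ∈ F12 j k := by
  simp [F12]

lemma pair_mem_F12 (j k : Fin n) : ({j, k} : Finset (Fin n)) ∈ F12 j k := by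
  simp [F12]

lemma cw_le (j k : Fin n) (x : Fin n → ZMod 2) (A : Finset (Finset (Fin n)))
    (hA : A ⊆ F12 j k) (hcov : Function.support x ⊆ ↑(A.sup id)) :
    combWeight (F12 j k) x ≤ A.card :=
  Nat.sInf_le ⟨A, hA, rfl, hcov⟩

lemma cw_spec (j k : Fin n) (x : Fin n → ZMod 2) :
    ∃ A : Finset (Finset (Fin n)), A ⊆ F12 j k ∧ A.card = combWeight (F12 j k) x ∧
      Function.support x ⊆ ↑(A.sup id) := by
  have hne : {m | ∃ A : Finset (Finset (Fin n)), A ⊆ F12 j k ∧ A.card = m ∧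
      Function.support x ⊆ ↑(A.sup id)}.Nonempty := by
    refine ⟨(F12 j k).card, F12 j k, le_refl _, rfl, ?_⟩
    intro i _
    have h1 : ({i} : Finset (Fin n)) ≤ (F12 j k).sup id :=
      Finset.le_sup (f := id) (singleton_mem_F12 j k i)
    exact h1 (Finset.mem_singleton_self i)
  obtain ⟨A, hA, hc, hcov⟩ := Nat.sInf_mem hne
  exact ⟨A, hA, hc, hcov⟩

lemma cw_zero (j k : Fin n) : combWeight (F12 j k) 0 = 0 := by
  apply Nat.eq_zero_of_le_zero
  have := cw_le j k 0 ∅ (Finset.empty_subset _) (by simp)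
  simpa using this

lemma cw_eq_zero_iff (j k : Fin n) (x : Fin n → ZMod 2) :
    combWeight (F12 j k) x = 0 ↔ x = 0 := by
  constructor
  · intro h
    obtain ⟨A, hA, hc, hcov⟩ := cw_spec j k x
    rw [h, Finset.card_eq_zero] at hc
    subst hc
    simp only [Finset.sup_empty, Finset.bot_eq_empty, Finset.coe_empty] at hcov
    funext i
    by_contra hi
    exact hcov hi
  · rintro rfl; exact cw_zero j k

lemma cw_subadd (j k : Fin n) (x y : Fin n → ZMod 2) :
    combWeight (F12 j k) (x + y) ≤ combWeight (F12 j k) x + combWeight (F12 j k) y := by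
  obtain ⟨A, hA, hAc, hAcov⟩ := cw_spec j k x
  obtain ⟨B, hB, hBc, hBcov⟩ := cw_spec j k y
  have hcov : Function.support (x + y) ⊆ ↑((A ∪ B).sup id) := by
    refine (Function.support_add x y).trans ?_
    rw [Finset.sup_union]
    intro i hi
    rcases hi with hi | hi
    · exact Finset.mem_union_left _ (hAcov hi)
    · exact Finset.mem_union_right _ (hBcov hi)
  calc combWeight (F12 j k) (x + y) ≤ (A ∪ B).card :=
        cw_le j k _ _ (Finset.union_subset hA hB) hcov
    _ ≤ A.card + B.card := Finset.card_union_le A B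
    _ = _ := by rw [hAc, hBc]

lemma cw_respects (j k : Fin n) (x y : Fin n → ZMod 2)
    (h : Function.support x ⊆ Function.support y) :
    combWeight (F12 j k) x ≤ combWeight (F12 j k) y := by
  obtain ⟨A, hA, hAc, hAcov⟩ := cw_spec j k y
  rw [← hAc]
  exact cw_le j k x A hA (h.trans hAcov)

lemma support_unitVec_subset (i : Fin n) :
    Function.support (unitVec i) ⊆ {i} := by
  intro t ht
  by_contra hti
  exact ht (Pi.single_eq_of_ne hti 1)

lemma eq_of_support_pair (j k : Fin n) (hjk : j ≠ k) (y : Fin n → ZMod 2)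
    (h : Function.support y ⊆ ({j, k} : Set (Fin n))) :
    y = Pi.single j (y j) + Pi.single k (y k) := by
  funext t
  by_cases htj : t = j
  · rw [htj, Pi.add_apply, Pi.single_eq_same, Pi.single_eq_of_ne hjk, add_zero]
  by_cases htk : t = k
  · rw [htk, Pi.add_apply, Pi.single_eq_of_ne (Ne.symm hjk), Pi.single_eq_same, zero_add]
  · have : y t = 0 := by
      by_contra h0
      rcases h h0 with h1 | h1 <;> [exact htj h1; exact htk h1]
    simp [this, Pi.single_eq_of_ne htj, Pi.single_eq_of_ne htk]

lemma eq_of_support_single (i : Fin n) (y : Fin n → ZMod 2)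
    (h : Function.support y ⊆ ({i} : Set (Fin n))) :
    y = Pi.single i (y i) := by
  funext t
  by_cases ht : t = i
  · subst ht; simp
  · have : y t = 0 := by
      by_contra h0
      exact ht (h h0)
    simp [this, Pi.single_eq_of_ne ht]

lemma cw_le_one_iff (j k : Fin n) (hjk : j ≠ k) (y : Fin n → ZMod 2) :
    combWeight (F12 j k) y ≤ 1 ↔ y ∈ Dnx (unitVec j + unitVec k) := by
  constructor
  · intro h
    obtain ⟨A, hA, hAc, hAcov⟩ := cw_spec j k y
    have h1 : A.card ≤ 1 := by omega
    rcases Nat.le_one_iff_eq_zero_or_eq_one.mp h1 with h0 | h0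
    · rw [Finset.card_eq_zero] at h0
      subst h0
      simp only [Finset.sup_empty, Finset.bot_eq_empty, Finset.coe_empty] at hAcov
      left; left
      funext i
      by_contra hi
      exact hAcov hi
    · obtain ⟨s, rfl⟩ := Finset.card_eq_one.mp h0
      simp only [Finset.sup_singleton, id] at hAcov
      have hs : s ∈ F12 j k := hA (Finset.mem_singleton_self s)
      rw [F12, Finset.mem_union] at hs
      rcases hs with hs | hs
      · obtain ⟨i, _, rfl⟩ := Finset.mem_image.mp hs
        have := eq_of_support_single i y (by simpa using hAcov)
        rcases zmod2_cases (y i) with h1 | h1 <;> rw [h1] at this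
        · left; left; simpa using this
        · right; exact ⟨i, this.symm⟩
      · rw [Finset.mem_singleton] at hs
        subst hs
        have hcov' : Function.support y ⊆ ({j, k} : Set (Fin n)) := by
          intro t ht
          have := hAcov ht
          simpa using this
        have hy := eq_of_support_pair j k hjk y hcov'
        rcases zmod2_cases (y j) with h1 | h1 <;> rcases zmod2_cases (y k) with h2 | h2 <;>
          rw [h1, h2] at hy
        · left; left; simpa using hy
        · right; exact ⟨k, by simpa [unitVec] using hy.symm⟩
        · right; exact ⟨j, by simpa [unitVec] using hy.symm⟩
        · left; right; exact hy
  · intro hy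
    rcases hy with (rfl | rfl) | ⟨i, rfl⟩
    · rw [cw_zero]; omega
    · refine (cw_le j k _ {({j, k} : Finset (Fin n))}
        (by intro s hs; rw [Finset.mem_singleton] at hs; subst hs; exact pair_mem_F12 j k)
        ?_).trans (by simp)
      simp only [Finset.sup_singleton, id]
      refine (Function.support_add _ _).trans ?_
      intro t ht
      rcases ht with ht | ht
      · have : t = j := support_unitVec_subset j ht
        simp [this]
      · have : t = k := support_unitVec_subset k ht
        simp [this]
    · refine (cw_le j k _ {({i} : Finset (Fin n))}
        (by intro s hs; rw [Finset.mem_singleton] at hs; subst hs; exact singleton_mem_F12 j k i)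
        ?_).trans (by simp)
      simp only [Finset.sup_singleton, id]
      intro t ht
      have := support_unitVec_subset i ht
      simpa using this

end Aux
/-- for `j ≠ k`, `x = e_j + e_k` and `F = {{i} : i} ∪ {{j,k}}`, the
combinatorial metric `d_F` is a TS-metric with `B_{d_F}(0,1) = D_n(x)`; consequently any
tiling `(D_n(x), C)` makes `C` a `(d_F, 1)`-perfect code. -/
theorem stmt_12 {n : ℕ} (j k : Fin n) (hjk : j ≠ k) :
    IsTSMetric (fun x y : Fin n → ZMod 2 => (combWeight (F12 j k) (x + y) : ℝ)) ∧
    tsBall (fun x y : Fin n → ZMod 2 => (combWeight (F12 j k) (x + y) : ℝ)) 0 1 =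
      Dnx (unitVec j + unitVec k) ∧
    ∀ C : Set (Fin n → ZMod 2), IsTiling (Dnx (unitVec j + unitVec k)) C →
      IsPerfectCode (fun x y : Fin n → ZMod 2 => (combWeight (F12 j k) (x + y) : ℝ)) 1 C := by
  have hball : ∀ c : Fin n → ZMod 2,
      tsBall (fun x y : Fin n → ZMod 2 => (combWeight (F12 j k) (x + y) : ℝ)) c 1 =
        (c + ·) '' Dnx (unitVec j + unitVec k) := by
    intro c
    ext y
    simp only [tsBall, Set.mem_setOf_eq, Nat.cast_le_one]
    rw [cw_le_one_iff j k hjk]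
    constructor
    · intro h
      refine ⟨c + y, h, ?_⟩
      simp only
      rw [← add_assoc, vec_add_self, zero_add]
    · rintro ⟨z, hz, rfl⟩
      simpa [← add_assoc, vec_add_self] using hz
  refine ⟨?_, ?_, ?_⟩
  · refine ⟨fun v => (combWeight (F12 j k) v : ℝ), ⟨fun v => Nat.cast_nonneg _,
      fun v => ?_, fun a b => ?_⟩, fun a b h => ?_, fun a b => rfl⟩
    · rw [Nat.cast_eq_zero]; exact cw_eq_zero_iff j k v
    · show ((combWeight (F12 j k) (a + b) : ℕ) : ℝ) ≤ _
      push_cast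
      exact_mod_cast cw_subadd j k a b
    · show ((combWeight (F12 j k) a : ℕ) : ℝ) ≤ ((combWeight (F12 j k) b : ℕ) : ℝ)
      exact Nat.cast_le.mpr (cw_respects j k a b h)
  · rw [hball 0]
    ext y
    constructor
    · rintro ⟨z, hz, rfl⟩; simpa using hz
    · intro hy; exact ⟨y, hy, by simp⟩
  · intro C hC
    obtain ⟨hcov, hdisj⟩ := hC
    constructor
    · rw [← hcov]
      refine Set.iUnion₂_congr fun c _ => hball c
    · intro c hc c' hc' hne
      rw [hball c, hball c']
      exact hdisj hc hc' hne
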